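/- arXiv:2402.08412 — 2 statements merged into one kernel-verified Lean document; each statement's English description precedes it below -/
import Mathlib

section
/- Let $H$ be a Hilbert space (of interaction kernels with norm $\|\cdot\|_\rho$), let $N \geq 2$, and let $\mathcal{M}$ denote the set of matrices $\mathbf{a} \in [0,1]^{N \times N}$ with zero diagonal and each row of unit $\ell^2$-norm. Suppose a bilinear error functional satisfies the rank-2 joint coercivity bound: for all orthogonal $\Phi_1, \Phi_2 \in H$ and all rows $a^{(1)}, a^{(2)}$, $\mathcal{E}^{(i)}(a^{(1)}, \Phi_1; a^{(2)}, \Phi_2) \geq c_H (|a^{(1)}|^2 \|\Phi_1\|_\rho^2 + |a^{(2)}|^2 \|\Phi_2\|_\rho^2)$ with $c_H > 0$, where $\mathcal{E}^{(i)}$ is the expected squared residual between two matrix-kernel pairs. Then if the true parameters are $\mathbf{a}^* \in \mathcal{M}$ and $\Phi_* \in H \setminus \{0\}$, the pair $(\mathbf{a}^*, \Phi_*)$ is the unique zero of the population loss $\mathcal{E}(\mathbf{a}, \Phi) = \sum_i \mathbb{E}\big[\big|\sum_{j \neq i}(\mathbf{a}_{ij}\Phi(\mathbf{r}_{ij}) -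 \mathbf{a}^*_{ij}\Phi_*(\mathbf{r}_{ij}))\big|^2\big]$ over $\mathcal{M} \times H$. -/
open MeasureTheory Finset
open scoped RealInnerProductSpace

/-- rank-2 joint coercivity implies identifiability of the pair
(weight matrix, interaction kernel). Here `H` is the Hilbert space of kernels,
`ev` is the (linear) evaluation of a kernel on the pairwise differences
`r_{ij}` as random vectors, and the population loss vanishes exactly at the
true parameters. -/
theorem stmt_1 {Ω : Type*} [MeasurableSpace Ω] (μ : Measure Ω) [IsProbabilityMeasure μ]
    {H : Type*} [NormedAddCommGroup H] [InnerProductSpace ℝ H]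
    {E : Type*} [NormedAddCommGroup E] [InnerProductSpace ℝ E]
    {N : ℕ} (hN : 2 ≤ N)
    (ev : H →ₗ[ℝ] (Fin N → Fin N → Ω → E))
    (cH : ℝ) (hcH : 0 < cH)
    (hcoer : ∀ (Φ₁ Φ₂ : H), ⟪Φ₁, Φ₂⟫ = 0 →
      ∀ (i : Fin N) (b₁ b₂ : Fin N → ℝ),
        cH * ((∑ j ∈ univ.erase i, (b₁ j) ^ 2) * ‖Φ₁‖ ^ 2
              + (∑ j ∈ univ.erase i, (b₂ j) ^ 2) * ‖Φ₂‖ ^ 2)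
          ≤ ∫ ω, ‖∑ j ∈ univ.erase i,
                (b₁ j • ev Φ₁ i j ω + b₂ j • ev Φ₂ i j ω)‖ ^ 2 ∂μ)
    (aStar : Fin N → Fin N → ℝ)
    (haStar : (∀ i j, 0 ≤ aStar i j ∧ aStar i j ≤ 1) ∧ (∀ i, aStar i i = 0)
      ∧ ∀ i, ∑ j, (aStar i j) ^ 2 = 1)
    (ΦStar : H) (hΦStar : ΦStar ≠ 0)
    (a : Fin N → Fin N → ℝ)
    (ha : (∀ i j, 0 ≤ a i j ∧ a i j ≤ 1) ∧ (∀ i, a i i = 0)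
      ∧ ∀ i, ∑ j, (a i j) ^ 2 = 1)
    (Φ : H)
    (hloss : ∑ i, ∫ ω, ‖∑ j ∈ univ.erase i,
        (a i j • ev Φ i j ω - aStar i j • ev ΦStar i j ω)‖ ^ 2 ∂μ = 0) :
    a = aStar ∧ Φ = ΦStar := by
  obtain ⟨haS_bd, haS_diag, haS_row⟩ := haStar
  obtain ⟨ha_bd, ha_diag, ha_row⟩ := ha
  have hΦS2 : (0:ℝ) < ‖ΦStar‖ ^ 2 := pow_pos (norm_pos_iff.mpr hΦStar) 2
  set p : ℝ := ⟪Φ, ΦStar⟫ / ‖ΦStar‖ ^ 2 with hp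
  set Ψ : H := Φ - p • ΦStar with hΨ
  have horth : ⟪ΦStar, Ψ⟫ = 0 := by
    rw [hΨ, inner_sub_right, inner_smul_right, real_inner_self_eq_norm_sq, hp,
      real_inner_comm]
    field_simp
    ring
  -- the residual equals the decomposed combination
  have hEq : ∀ (i : Fin N) (ω : Ω),
      (∑ j ∈ univ.erase i, ((p * a i j - aStar i j) • ev ΦStar i j ω
        + a i j • ev Ψ i j ω))
      = ∑ j ∈ univ.erase i, (a i j • ev Φ i j ω - aStar i j • ev ΦStar i j ω) := by
    intro i ω
    refine Finset.sum_congr rfl fun j _ => ?_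
    have : ev Ψ = ev Φ - p • ev ΦStar := by rw [hΨ, map_sub, ev.map_smul]
    rw [this]
    simp only [Pi.sub_apply, Pi.smul_apply, smul_sub, sub_smul, smul_smul]
    module
  -- each term of the loss is zero
  have hterm : ∀ i, (∫ ω, ‖∑ j ∈ univ.erase i,
      (a i j • ev Φ i j ω - aStar i j • ev ΦStar i j ω)‖ ^ 2 ∂μ) = 0 := by
    have := (Finset.sum_eq_zero_iff_of_nonneg (fun i _ =>
      integral_nonneg (fun ω => by positivity))).mp hloss
    intro i; exact this i (Finset.mem_univ i)
  -- coercivity gives vanishing of the two components, rowwise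
  have hkey : ∀ i : Fin N,
      (∑ j ∈ univ.erase i, (p * a i j - aStar i j) ^ 2) * ‖ΦStar‖ ^ 2 = 0 ∧
      (∑ j ∈ univ.erase i, (a i j) ^ 2) * ‖Ψ‖ ^ 2 = 0 := by
    intro i
    have hc := hcoer ΦStar Ψ horth i (fun j => p * a i j - aStar i j) (a i)
    have hint : (∫ ω, ‖∑ j ∈ univ.erase i,
        ((p * a i j - aStar i j) • ev ΦStar i j ω + a i j • ev Ψ i j ω)‖ ^ 2 ∂μ) = 0 := by
      rw [show (fun ω => ‖∑ j ∈ univ.erase i,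
        ((p * a i j - aStar i j) • ev ΦStar i j ω + a i j • ev Ψ i j ω)‖ ^ 2)
        = fun ω => ‖∑ j ∈ univ.erase i,
        (a i j • ev Φ i j ω - aStar i j • ev ΦStar i j ω)‖ ^ 2 from
        funext fun ω => by rw [hEq i ω]]
      exact hterm i
    rw [hint] at hc
    have hA : (0:ℝ) ≤ (∑ j ∈ univ.erase i, (p * a i j - aStar i j) ^ 2) * ‖ΦStar‖ ^ 2 := by
      positivity
    have hB : (0:ℝ) ≤ (∑ j ∈ univ.erase i, (a i j) ^ 2) * ‖Ψ‖ ^ 2 := by positivity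
    have hsum0 : (∑ j ∈ univ.erase i, (p * a i j - aStar i j) ^ 2) * ‖ΦStar‖ ^ 2
        + (∑ j ∈ univ.erase i, (a i j) ^ 2) * ‖Ψ‖ ^ 2 = 0 := by
      nlinarith
    constructor <;> nlinarith
  -- row sums over erase i equal full row sums
  have herase : ∀ (b : Fin N → Fin N → ℝ), (∀ i, b i i = 0) →
      ∀ i, ∑ j ∈ univ.erase i, (b i j) ^ 2 = ∑ j, (b i j) ^ 2 := by
    intro b hb i
    rw [← Finset.sum_erase_add _ _ (Finset.mem_univ i), hb, ]
    simp
  -- Ψ = 0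
  have hΨ0 : Ψ = 0 := by
    have i0 : Fin N := ⟨0, by omega⟩
    have h2 := (hkey i0).2
    rw [herase a ha_diag i0, ha_row i0, one_mul] at h2
    have : ‖Ψ‖ = 0 := by nlinarith [norm_nonneg Ψ]
    exact norm_eq_zero.mp this
  -- p * a i j = aStar i j for all i j
  have hpa : ∀ i j, p * a i j = aStar i j := by
    intro i j
    by_cases hij : j = i
    · subst hij; rw [ha_diag, haS_diag, mul_zero]
    · have h1 := (hkey i).1
      have hs0 : ∑ j ∈ univ.erase i, (p * a i j - aStar i j) ^ 2 = 0 := by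
        rcases mul_eq_zero.mp h1 with h | h
        · exact h
        · exact absurd h (by positivity)
      have := (Finset.sum_eq_zero_iff_of_nonneg (fun j _ => sq_nonneg _)).mp hs0 j
        (Finset.mem_erase.mpr ⟨hij, Finset.mem_univ j⟩)
      have := pow_eq_zero_iff (n := 2) (by norm_num) |>.mp this
      linarith
  -- p^2 = 1
  have i0 : Fin N := ⟨0, by omega⟩
  have hp2 : p ^ 2 = 1 := by
    have : ∑ j, (p * a i0 j) ^ 2 = 1 := by
      simp_rw [fun j => hpa i0 j]; exact haS_row i0
    have hexp : ∑ j, (p * a i0 j) ^ 2 = p ^ 2 * ∑ j, (a i0 j) ^ 2 := by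
      rw [Finset.mul_sum]; exact Finset.sum_congr rfl fun j _ => by ring
    rw [hexp, ha_row i0, mul_one] at this
    exact this
  have hp1 : p = 1 := by
    rcases mul_self_eq_one_iff.mp (by nlinarith : p * p = 1) with h | hneg
    · exact h
    · exfalso
      have hall : ∀ j, aStar i0 j = 0 := by
        intro j
        have h := hpa i0 j
        rw [hneg] at h
        have h1 := (ha_bd i0 j).1
        have h2 := (haS_bd i0 j).1
        linarith
      have := haS_row i0
      simp [hall] at this
  refine ⟨?_, ?_⟩
  · funext i j
    have := hpa i j
    rw [hp1, one_mul] at this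
    exact this
  · have : Φ = p • ΦStar := by
      have := hΨ0
      rw [hΨ, sub_eq_zero] at this
      exact this
    rw [this, hp1, one_smul]
end

section
/- Evaluate: $\int_0^\infty \int_0^\infty e^{-\frac{5(r^2+s^2)}{12}}\Big[\frac{3}{2rs}\big(e^{\frac{2rs}{3}} - e^{-\frac{2rs}{3}}\big) - 2\Big] r^2 s^2\, dr\, ds = 8\pi - \frac{216\pi}{125} = \frac{784\pi}{125}$. -/
open Real MeasureTheory Set

lemma integrable_lin_gauss {a : ℝ} (ha : 0 < a) (c : ℝ) :
    Integrable (fun s : ℝ => s * rexp (-a * s ^ 2 + c * s)) := by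
  have key : (fun s : ℝ => s * rexp (-a * s ^ 2 + c * s))
      = fun s => rexp (c ^ 2 / (4 * a)) *
          ((s - c / (2 * a)) * rexp (-a * (s - c / (2 * a)) ^ 2)
            + c / (2 * a) * rexp (-a * (s - c / (2 * a)) ^ 2)) := by
    funext s
    have h1 : -a * s ^ 2 + c * s = c ^ 2 / (4 * a) + -a * (s - c / (2 * a)) ^ 2 := by
      field_simp; ring
    rw [h1, Real.exp_add]; ring
  rw [key]
  exact (((integrable_mul_exp_neg_mul_sq ha).comp_sub_right _).add
    (((integrable_exp_neg_mul_sq ha).comp_sub_right _).const_mul _)).const_mul _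

lemma integral_odd_gauss {a : ℝ} (ha : 0 < a) :
    ∫ t : ℝ, t * rexp (-a * t ^ 2) = 0 := by
  have hI := (integrable_mul_exp_neg_mul_sq ha)
  have hneg : ∫ t in Iic (0:ℝ), t * rexp (-a * t ^ 2)
      = - ∫ t in Ioi (0:ℝ), t * rexp (-a * t ^ 2) := by
    have h := integral_comp_neg_Ioi (0:ℝ) (fun t : ℝ => t * rexp (-a * t ^ 2))
    simp only [neg_zero] at h
    rw [← h, ← integral_neg]
    refine setIntegral_congr_fun measurableSet_Ioi fun x _ => ?_
    simp only [neg_sq, neg_mul]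
  have hsum := intervalIntegral.integral_Iic_add_Ioi (b := (0:ℝ)) hI.integrableOn hI.integrableOn
  rw [← hsum, hneg]; ring

lemma integral_lin_gauss {a : ℝ} (ha : 0 < a) (c : ℝ) :
    ∫ s : ℝ, s * rexp (-a * s ^ 2 + c * s)
      = c / (2 * a) * Real.sqrt (π / a) * rexp (c ^ 2 / (4 * a)) := by
  have key : (fun s : ℝ => s * rexp (-a * s ^ 2 + c * s))
      = fun s => rexp (c ^ 2 / (4 * a)) *
          ((s - c / (2 * a)) * rexp (-a * (s - c / (2 * a)) ^ 2)
            + c / (2 * a) * rexp (-a * (s - c / (2 * a)) ^ 2)) := by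
    funext s
    have h1 : -a * s ^ 2 + c * s = c ^ 2 / (4 * a) + -a * (s - c / (2 * a)) ^ 2 := by
      field_simp; ring
    rw [h1, Real.exp_add]; ring
  rw [key, integral_const_mul,
    integral_add ((integrable_mul_exp_neg_mul_sq ha).comp_sub_right _)
      (((integrable_exp_neg_mul_sq ha).comp_sub_right _).const_mul _),
    integral_sub_right_eq_self (fun t : ℝ => t * rexp (-a * t ^ 2)) (c / (2 * a)),
    integral_odd_gauss ha, integral_const_mul,
    integral_sub_right_eq_self (fun t : ℝ => rexp (-a * t ^ 2)) (c / (2 * a)),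
    integral_gaussian]
  ring

lemma sinh_gauss_Ioi {a : ℝ} (ha : 0 < a) (c : ℝ) :
    ∫ s in Ioi (0:ℝ), (s * rexp (-a * s ^ 2 + c * s) - s * rexp (-a * s ^ 2 + -c * s))
      = c / (2 * a) * Real.sqrt (π / a) * rexp (c ^ 2 / (4 * a)) := by
  have h1 := integrable_lin_gauss ha c
  have h2 := integrable_lin_gauss ha (-c)
  have h2' : Integrable (fun s : ℝ => s * rexp (-a * s ^ 2 + -c * s)) := by
    simpa only [neg_mul] using h2
  rw [integral_sub h1.integrableOn h2'.integrableOn]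
  have hIic : ∫ s in Iic (0:ℝ), s * rexp (-a * s ^ 2 + c * s)
      = - ∫ s in Ioi (0:ℝ), s * rexp (-a * s ^ 2 + -c * s) := by
    have h := integral_comp_neg_Ioi (0:ℝ) (fun s : ℝ => s * rexp (-a * s ^ 2 + c * s))
    simp only [neg_zero] at h
    rw [← h, ← integral_neg]
    refine setIntegral_congr_fun measurableSet_Ioi fun x _ => ?_
    have harg : -a * (-x) ^ 2 + c * (-x) = -a * x ^ 2 + -c * x := by ring
    simp only [harg]; ring
  have hsum := intervalIntegral.integral_Iic_add_Ioi (b := (0:ℝ)) h1.integrableOn h1.integrableOn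
  rw [integral_lin_gauss ha c] at hsum
  linarith [hsum, hIic]

lemma integrableOn_sq_gauss {b : ℝ} (hb : 0 < b) :
    IntegrableOn (fun x : ℝ => x ^ 2 * rexp (-b * x ^ 2)) (Ioi 0) := by
  have h := integrableOn_rpow_mul_exp_neg_mul_sq hb (s := 2) (by norm_num)
  refine h.congr_fun (fun x hx => ?_) measurableSet_Ioi
  dsimp only
  rw [show ((2:ℝ)) = ((2:ℕ):ℝ) by norm_num, Real.rpow_natCast]

lemma integral_sq_gauss {b : ℝ} (hb : 0 < b) :
    ∫ x in Ioi (0:ℝ), x ^ 2 * rexp (-b * x ^ 2) = Real.sqrt (π / b) / (4 * b) := by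
  have h := integral_rpow_mul_exp_neg_mul_rpow (p := 2) (q := 2) (by norm_num) (by norm_num) hb
  have hL : ∫ x in Ioi (0:ℝ), x ^ (2:ℝ) * rexp (-b * x ^ (2:ℝ))
      = ∫ x in Ioi (0:ℝ), x ^ 2 * rexp (-b * x ^ 2) := by
    refine setIntegral_congr_fun measurableSet_Ioi fun x _ => ?_
    rw [show ((2:ℝ)) = ((2:ℕ):ℝ) by norm_num, Real.rpow_natCast]
  rw [hL] at h
  rw [h]
  have hG : Real.Gamma (((2:ℝ) + 1) / 2) = Real.sqrt π / 2 := by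
    rw [show ((2:ℝ) + 1) / 2 = 1/2 + 1 by norm_num,
      Real.Gamma_add_one (by norm_num), Real.Gamma_one_half_eq]
    ring
  rw [hG, show (-((2:ℝ) + 1) / 2) = -(3/2) by norm_num, Real.rpow_neg hb.le]
  have hb32 : b ^ ((3:ℝ)/2) = b * Real.sqrt b := by
    rw [show (3:ℝ)/2 = 1 + 1/2 by norm_num, Real.rpow_add hb, Real.rpow_one,
      ← Real.sqrt_eq_rpow]
  have hsb : (0:ℝ) < Real.sqrt b := Real.sqrt_pos.mpr hb
  have hdiv : Real.sqrt (π / b) = Real.sqrt π / Real.sqrt b := by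
    exact Real.sqrt_div Real.pi_nonneg b
  rw [hb32, hdiv, div_div, eq_div_iff (by positivity), inv_mul_eq_div, div_mul_eq_mul_div,
    div_mul_eq_mul_div, div_mul_eq_mul_div, div_eq_iff (by positivity)]
  ring

/-- evaluation of the constant `J₀(3)` for the three-dimensional
Gaussian coercivity computation. -/
theorem stmt_12 :
    (∫ r in Set.Ioi (0 : ℝ), ∫ s in Set.Ioi (0 : ℝ),
        Real.exp (-(5 * (r ^ 2 + s ^ 2)) / 12) *
          ((3 / (2 * r * s)) * (Real.exp (2 * r * s / 3) - Real.exp (-(2 * r * s / 3))) - 2)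
          * (r ^ 2 * s ^ 2))
      = 784 * π / 125
    ∧ 8 * π - 216 * π / 125 = 784 * π / 125 := by
  constructor
  · have h512 : (0:ℝ) < 5/12 := by norm_num
    have h320 : (0:ℝ) < 3/20 := by norm_num
    have hinner : ∀ r ∈ Ioi (0:ℝ),
        (∫ s in Ioi (0 : ℝ),
          Real.exp (-(5 * (r ^ 2 + s ^ 2)) / 12) *
            ((3 / (2 * r * s)) * (Real.exp (2 * r * s / 3) - Real.exp (-(2 * r * s / 3))) - 2)
            * (r ^ 2 * s ^ 2))
        = Real.sqrt (π / (5/12)) * (6/5) * (r ^ 2 * rexp (-(3/20) * r ^ 2))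
          - Real.sqrt (π / (5/12)) * (6/5) * (r ^ 2 * rexp (-(5/12) * r ^ 2)) := by
      intro r hr
      have hr0 : (0:ℝ) < r := hr
      have hcong : ∀ s ∈ Ioi (0:ℝ),
          Real.exp (-(5 * (r ^ 2 + s ^ 2)) / 12) *
            ((3 / (2 * r * s)) * (Real.exp (2 * r * s / 3) - Real.exp (-(2 * r * s / 3))) - 2)
            * (r ^ 2 * s ^ 2)
          = (3 * r / 2 * rexp (-(5/12) * r ^ 2)) *
              (s * rexp (-(5/12) * s ^ 2 + (2 * r / 3) * s)
                - s * rexp (-(5/12) * s ^ 2 + -(2 * r / 3) * s))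
            - (2 * r ^ 2 * rexp (-(5/12) * r ^ 2)) * (s ^ 2 * rexp (-(5/12) * s ^ 2)) := by
        intro s hs
        have hs0 : (0:ℝ) < s := hs
        have e1 : rexp (-(5 * (r ^ 2 + s ^ 2)) / 12)
            = rexp (-(5/12) * r ^ 2) * rexp (-(5/12) * s ^ 2) := by
          rw [← Real.exp_add]; congr 1; ring
        have e2 : rexp (-(5/12) * s ^ 2 + (2 * r / 3) * s)
            = rexp (-(5/12) * s ^ 2) * rexp (2 * r * s / 3) := by
          rw [← Real.exp_add]; congr 1; ring
        have e3 : rexp (-(5/12) * s ^ 2 + -(2 * r / 3) * s)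
            = rexp (-(5/12) * s ^ 2) * rexp (-(2 * r * s / 3)) := by
          rw [← Real.exp_add]; congr 1; ring
        rw [e1, e2, e3]
        field_simp
      rw [setIntegral_congr_fun measurableSet_Ioi hcong]
      have hint1 : Integrable (fun s : ℝ =>
          (3 * r / 2 * rexp (-(5/12) * r ^ 2)) *
            (s * rexp (-(5/12) * s ^ 2 + (2 * r / 3) * s)
              - s * rexp (-(5/12) * s ^ 2 + -(2 * r / 3) * s)))
          (volume.restrict (Ioi 0)) := by
        refine Integrable.const_mul ?_ _
        have ha := (integrable_lin_gauss h512 (2 * r / 3)).integrableOn (s := Ioi 0)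
        have hb := (integrable_lin_gauss h512 (-(2 * r / 3))).integrableOn (s := Ioi 0)
        have hb' : Integrable (fun s : ℝ => s * rexp (-(5/12) * s ^ 2 + -(2 * r / 3) * s))
            (volume.restrict (Ioi 0)) := by
          simpa only [neg_mul, IntegrableOn] using hb
        exact ha.sub hb'
      have hint2 : Integrable (fun s : ℝ =>
          (2 * r ^ 2 * rexp (-(5/12) * r ^ 2)) * (s ^ 2 * rexp (-(5/12) * s ^ 2)))
          (volume.restrict (Ioi 0)) :=
        (integrableOn_sq_gauss h512).const_mul _
      rw [integral_sub hint1 hint2, integral_const_mul, integral_const_mul,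
        sinh_gauss_Ioi h512 (2 * r / 3), integral_sq_gauss h512]
      have e4 : rexp (-(3/20) * r ^ 2)
          = rexp (-(5/12) * r ^ 2) * rexp ((2 * r / 3) ^ 2 / (4 * (5/12))) := by
        rw [← Real.exp_add]; congr 1; ring
      rw [e4]
      ring
    rw [setIntegral_congr_fun measurableSet_Ioi hinner]
    have hint3 : Integrable (fun r : ℝ =>
        Real.sqrt (π / (5/12)) * (6/5) * (r ^ 2 * rexp (-(3/20) * r ^ 2)))
        (volume.restrict (Ioi 0)) := (integrableOn_sq_gauss h320).const_mul _
    have hint4 : Integrable (fun r : ℝ =>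
        Real.sqrt (π / (5/12)) * (6/5) * (r ^ 2 * rexp (-(5/12) * r ^ 2)))
        (volume.restrict (Ioi 0)) := (integrableOn_sq_gauss h512).const_mul _
    rw [integral_sub hint3 hint4, integral_const_mul, integral_const_mul,
      integral_sq_gauss h320, integral_sq_gauss h512]
    have hKK : Real.sqrt (π / (5/12)) * Real.sqrt (π / (3/20)) = 4 * π := by
      rw [← Real.sqrt_mul (by positivity),
        show π / (5/12) * (π / (3/20)) = (4 * π) ^ 2 by ring,
        Real.sqrt_sq (by positivity)]
    have hK2 : Real.sqrt (π / (5/12)) * Real.sqrt (π / (5/12)) = π / (5/12) :=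
      Real.mul_self_sqrt (by positivity)
    linear_combination 2 * hKK - (18/25) * hK2
  · ring
end
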